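/- For positive definite density matrices ρ, σ on ℂ^d, the Petz Rényi divergence D_α(ρ‖σ) := (1/(α-1)) log Tr[ρ^α σ^{1-α}] is monotone increasing in α on (0,1). -/

import Mathlib

open Matrix
open scoped BigOperators ComplexOrder

noncomputable section

variable {n : Type*} [Fintype n] [DecidableEq n]

/-- Apply a real function spectrally to a Hermitian matrix (junk value `0` otherwise). -/
def specFun (f : ℝ → ℝ) (A : Matrix n n ℂ) : Matrix n n ℂ :=
  if hA : A.IsHermitian then
    (hA.eigenvectorUnitary : Matrix n n ℂ) *
      Matrix.diagonal (fun i => ((f (hA.eigenvalues i) : ℝ) : ℂ)) *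
      star (hA.eigenvectorUnitary : Matrix n n ℂ)
  else 0

/-- Spectral real power of a matrix (`0 ^ α = 0` for `α ∈ (0,1)` via `Real.rpow`). -/
def mPow (A : Matrix n n ℂ) (α : ℝ) : Matrix n n ℂ := specFun (fun x => x ^ α) A

/-- The Petz Rényi divergence `D_α(ρ‖σ) = (1/(α-1)) log Tr[ρ^α σ^{1-α}]`. -/
def petzD (ρ σ : Matrix n n ℂ) (α : ℝ) : ℝ :=
  (1 / (α - 1)) * Real.log (((mPow ρ α * mPow σ (1 - α)).trace).re)

private lemma trace_calc' {d : ℕ} (U V : Matrix (Fin d) (Fin d) ℂ) (p q : Fin d → ℝ) :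
    ((U * Matrix.diagonal (fun i => (p i : ℂ)) * star U) *
     (V * Matrix.diagonal (fun j => (q j : ℂ)) * star V)).trace
    = ((∑ i, ∑ j, p i * q j * Complex.normSq ((star U * V) i j) : ℝ) : ℂ) := by
  set M : Matrix (Fin d) (Fin d) ℂ := star U * V with hM
  have h1 : (U * Matrix.diagonal (fun i => (p i : ℂ)) * star U) *
     (V * Matrix.diagonal (fun j => (q j : ℂ)) * star V)
     = U * (Matrix.diagonal (fun i => (p i : ℂ)) * star U * V *
         Matrix.diagonal (fun j => (q j : ℂ)) * star V) := by
    simp only [Matrix.mul_assoc]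
  rw [h1, Matrix.trace_mul_comm]
  have h2 : (Matrix.diagonal (fun i => (p i : ℂ)) * star U * V *
       Matrix.diagonal (fun j => (q j : ℂ)) * star V) * U
     = Matrix.diagonal (fun i => (p i : ℂ)) * M *
         Matrix.diagonal (fun j => (q j : ℂ)) * star M := by
    rw [hM, StarMul.star_mul, star_star]
    simp only [Matrix.mul_assoc]
  rw [h2]
  simp only [Matrix.trace, Matrix.diag, Matrix.mul_apply, Matrix.diagonal_apply,
    Matrix.star_apply, ite_mul, zero_mul, mul_ite, mul_zero, Finset.sum_ite_eq,
    Finset.sum_ite_eq', Finset.mem_univ, if_true]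
  push_cast
  congr 1; funext i
  congr 1; funext j
  rw [RCLike.star_def]
  rw [show (p i : ℂ) * M i j * (q j) * (starRingEnd ℂ) (M i j)
      = (p i) * (q j) * (M i j * (starRingEnd ℂ) (M i j)) by ring, Complex.mul_conj]

private lemma holder_two' {ι : Type*} (s : Finset ι) (x y : ι → ℝ) (hx : ∀ i, 0 ≤ x i)
    (hy : ∀ i, 0 ≤ y i) {a b : ℝ} (ha : 0 < a) (hb : 0 < b) (hab : a + b = 1) :
    ∑ i ∈ s, x i ^ a * y i ^ b ≤ (∑ i ∈ s, x i) ^ a * (∑ i ∈ s, y i) ^ b := by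
  have ha1 : a < 1 := by linarith
  have hpq : Real.HolderConjugate a⁻¹ b⁻¹ := by
    constructor
    · rw [inv_inv, inv_inv, hab, inv_one]
    · exact inv_pos.mpr ha
    · exact inv_pos.mpr hb
  have h := Real.inner_le_Lp_mul_Lq_of_nonneg s hpq
    (f := fun i => x i ^ a) (g := fun i => y i ^ b)
    (fun i _ => Real.rpow_nonneg (hx i) a) (fun i _ => Real.rpow_nonneg (hy i) b)
  have e1 : ∀ i, (x i ^ a) ^ (a⁻¹) = x i := fun i => by
    rw [← Real.rpow_mul (hx i), mul_inv_cancel₀ ha.ne', Real.rpow_one]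
  have e2 : ∀ i, (y i ^ b) ^ (b⁻¹) = y i := fun i => by
    rw [← Real.rpow_mul (hy i), mul_inv_cancel₀ hb.ne', Real.rpow_one]
  simp only [e1, e2, one_div, inv_inv] at h
  exact h

private lemma Fpos' {ι : Type*} [Fintype ι] (c p q : ι → ℝ) (hc : ∀ k, 0 ≤ c k)
    (hp : ∀ k, 0 < p k) (hq : ∀ k, 0 < q k) (hex : ∃ k, 0 < c k) (α : ℝ) :
    0 < ∑ k, c k * p k ^ α * q k ^ (1 - α) := by
  obtain ⟨k₀, hk₀⟩ := hex
  have : ∀ k ∈ Finset.univ (α := ι), 0 ≤ c k * p k ^ α * q k ^ (1 - α) := fun k _ =>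
    mul_nonneg (mul_nonneg (hc k) (Real.rpow_pos_of_pos (hp k) α).le)
      (Real.rpow_pos_of_pos (hq k) (1 - α)).le
  refine Finset.sum_pos' this ⟨k₀, Finset.mem_univ _, ?_⟩
  exact mul_pos (mul_pos hk₀ (Real.rpow_pos_of_pos (hp k₀) α))
    (Real.rpow_pos_of_pos (hq k₀) (1 - α))

private lemma logconvexF' {ι : Type*} [Fintype ι] (c p q : ι → ℝ) (hc : ∀ k, 0 ≤ c k)
    (hp : ∀ k, 0 < p k) (hq : ∀ k, 0 < q k) (hex : ∃ k, 0 < c k) :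
    ConvexOn ℝ Set.univ (fun α : ℝ => Real.log (∑ k, c k * p k ^ α * q k ^ (1 - α))) := by
  refine ⟨convex_univ, ?_⟩
  intro x _ y _ la mu hla hmu hlamu
  rcases eq_or_lt_of_le hla with h0 | hla
  · have : mu = 1 := by linarith
    simp [← h0, this]
  rcases eq_or_lt_of_le hmu with h0 | hmu
  · have : la = 1 := by linarith
    simp [← h0, this]
  simp only [smul_eq_mul]
  have key : ∀ k, c k * p k ^ (la * x + mu * y) * q k ^ (1 - (la * x + mu * y))
      = (c k * p k ^ x * q k ^ (1 - x)) ^ la * (c k * p k ^ y * q k ^ (1 - y)) ^ mu := by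
    intro k
    rcases eq_or_lt_of_le (hc k) with h0 | hck
    · rw [← h0]
      simp [Real.zero_rpow hla.ne', Real.zero_rpow hmu.ne']
    have e : (1 : ℝ) - (la * x + mu * y) = la * (1 - x) + mu * (1 - y) := by linarith
    have hpn : 0 ≤ c k * p k ^ x := mul_nonneg hck.le (Real.rpow_nonneg (hp k).le _)
    have hpn' : 0 ≤ c k * p k ^ y := mul_nonneg hck.le (Real.rpow_nonneg (hp k).le _)
    rw [e, Real.mul_rpow hpn (Real.rpow_nonneg (hq k).le _),
        Real.mul_rpow hck.le (Real.rpow_nonneg (hp k).le _),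
        Real.mul_rpow hpn' (Real.rpow_nonneg (hq k).le _),
        Real.mul_rpow hck.le (Real.rpow_nonneg (hp k).le _)]
    rw [← Real.rpow_mul (hp k).le, ← Real.rpow_mul (hq k).le,
        ← Real.rpow_mul (hp k).le, ← Real.rpow_mul (hq k).le]
    rw [show c k ^ la * p k ^ (x * la) * q k ^ ((1-x) * la) *
          (c k ^ mu * p k ^ (y * mu) * q k ^ ((1-y) * mu))
        = (c k ^ la * c k ^ mu) * (p k ^ (x*la) * p k ^ (y*mu)) *
          (q k ^ ((1-x)*la) * q k ^ ((1-y)*mu)) from by ring,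
       ← Real.rpow_add hck, ← Real.rpow_add (hp k), ← Real.rpow_add (hq k),
       hlamu, Real.rpow_one,
       show x * la + y * mu = la * x + mu * y from by ring,
       show (1-x) * la + (1-y) * mu = la * (1-x) + mu * (1-y) from by ring]
  have hFz := Fpos' c p q hc hp hq hex (la * x + mu * y)
  have hFx := Fpos' c p q hc hp hq hex x
  have hFy := Fpos' c p q hc hp hq hex y
  have hsum : ∑ k, c k * p k ^ (la * x + mu * y) * q k ^ (1 - (la * x + mu * y))
      ≤ (∑ k, c k * p k ^ x * q k ^ (1 - x)) ^ la *
        (∑ k, c k * p k ^ y * q k ^ (1 - y)) ^ mu := by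
    rw [Finset.sum_congr rfl (fun k _ => key k)]
    exact holder_two' Finset.univ _ _
      (fun k => mul_nonneg (mul_nonneg (hc k) (Real.rpow_nonneg (hp k).le _))
        (Real.rpow_nonneg (hq k).le _))
      (fun k => mul_nonneg (mul_nonneg (hc k) (Real.rpow_nonneg (hp k).le _))
        (Real.rpow_nonneg (hq k).le _)) hla hmu hlamu
  have hlog := Real.log_le_log hFz hsum
  rwa [Real.log_mul (Real.rpow_pos_of_pos hFx la).ne' (Real.rpow_pos_of_pos hFy mu).ne',
      Real.log_rpow hFx, Real.log_rpow hFy] at hlog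

/-- The Petz Rényi divergence is monotone increasing in `α` on `(0,1)`. -/
theorem monotoneOn_petzD {d : ℕ} (ρ σ : Matrix (Fin d) (Fin d) ℂ)
    (hρ : ρ.PosDef) (hσ : σ.PosDef) (hρ1 : ρ.trace = 1) (hσ1 : σ.trace = 1) :
    MonotoneOn (fun α => petzD ρ σ α) (Set.Ioo (0 : ℝ) 1) := by
  have hA : ρ.IsHermitian := hρ.1
  have hB : σ.IsHermitian := hσ.1
  set U : Matrix (Fin d) (Fin d) ℂ := (hA.eigenvectorUnitary : Matrix (Fin d) (Fin d) ℂ) with hU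
  set V : Matrix (Fin d) (Fin d) ℂ := (hB.eigenvectorUnitary : Matrix (Fin d) (Fin d) ℂ) with hV
  set M : Matrix (Fin d) (Fin d) ℂ := star U * V with hM
  set p : Fin d → ℝ := hA.eigenvalues with hp
  set q : Fin d → ℝ := hB.eigenvalues with hq
  have hppos : ∀ i, 0 < p i := hρ.eigenvalues_pos
  have hqpos : ∀ j, 0 < q j := hσ.eigenvalues_pos
  -- the weights
  set c : Fin d × Fin d → ℝ := fun k => Complex.normSq (M k.1 k.2) with hcdef
  have hc : ∀ k, 0 ≤ c k := fun k => Complex.normSq_nonneg _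
  -- the trace formula
  have hmPow : ∀ (γ : ℝ), mPow ρ γ = U * Matrix.diagonal (fun i => ((p i ^ γ : ℝ) : ℂ)) * star U := by
    intro γ
    rw [mPow, specFun, dif_pos hA]
  have hmPow' : ∀ (γ : ℝ), mPow σ γ = V * Matrix.diagonal (fun j => ((q j ^ γ : ℝ) : ℂ)) * star V := by
    intro γ
    rw [mPow, specFun, dif_pos hB]
  have hre : ∀ α : ℝ, ((mPow ρ α * mPow σ (1 - α)).trace).re
      = ∑ k : Fin d × Fin d, c k * p k.1 ^ α * q k.2 ^ (1 - α) := by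
    intro α
    rw [hmPow α, hmPow' (1 - α), trace_calc' U V (fun i => p i ^ α) (fun j => q j ^ (1 - α)),
        Complex.ofReal_re, Fintype.sum_prod_type]
    refine Finset.sum_congr rfl fun i _ => Finset.sum_congr rfl fun j _ => ?_
    rw [hcdef]; ring
  -- row sums of c are 1
  have hUU : star U * U = 1 := Matrix.mem_unitaryGroup_iff'.mp hA.eigenvectorUnitary.2
  have hVV : V * star V = 1 := Matrix.mem_unitaryGroup_iff.mp hB.eigenvectorUnitary.2
  have hMM : M * star M = 1 := by
    rw [hM, StarMul.star_mul, star_star,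
        show star U * V * (star V * U) = star U * (V * star V) * U from by
          simp only [Matrix.mul_assoc], hVV, Matrix.mul_one, hUU]
  have hrow : ∀ i, ∑ j, Complex.normSq (M i j) = 1 := by
    intro i
    have h2 := congrFun (congrFun hMM i) i
    simp only [Matrix.mul_apply, Matrix.star_apply, Matrix.one_apply_eq, RCLike.star_def,
      Complex.mul_conj] at h2
    have h3 := congrArg Complex.re h2
    simpa using h3
  -- sum of eigenvalues of ρ is 1
  have htr : ∑ i, p i = 1 := by
    have h1 : ρ.trace = ∑ i, (p i : ℂ) := by
      conv_lhs => rw [hA.spectral_theorem, Unitary.conjStarAlgAut_apply]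
      rw [Matrix.trace_mul_cycle, ← hU, hUU, Matrix.one_mul, Matrix.trace_diagonal]
      simp [hp, Function.comp]
    have h2 := congrArg Complex.re (h1.symm.trans hρ1)
    simpa using h2
  -- F 1 = 1
  have hF1 : ∑ k : Fin d × Fin d, c k * p k.1 ^ (1:ℝ) * q k.2 ^ (1 - (1:ℝ)) = 1 := by
    simp only [Real.rpow_one, sub_self, Real.rpow_zero, mul_one]
    rw [Fintype.sum_prod_type]
    calc ∑ i, ∑ j, c (i, j) * p i = ∑ i, p i * ∑ j, Complex.normSq (M i j) := by
          refine Finset.sum_congr rfl fun i _ => ?_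
          rw [Finset.mul_sum]
          exact Finset.sum_congr rfl fun j _ => by rw [hcdef]; ring
      _ = ∑ i, p i := by simp [hrow]
      _ = 1 := htr
  have hex : ∃ k, 0 < c k := by
    by_contra h
    push_neg at h
    have hz : ∀ k, c k = 0 := fun k => le_antisymm (h k) (hc k)
    have h0 : ∑ k : Fin d × Fin d, c k * p k.1 ^ (1:ℝ) * q k.2 ^ (1 - (1:ℝ)) = 0 :=
      Finset.sum_eq_zero fun k _ => by rw [hz k]; ring
    rw [hF1] at h0
    exact one_ne_zero h0
  -- the convex function
  set f : ℝ → ℝ := fun α => Real.log (∑ k : Fin d × Fin d, c k * p k.1 ^ α * q k.2 ^ (1 - α))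
    with hfdef
  have hconv : ConvexOn ℝ Set.univ f :=
    logconvexF' c (fun k => p k.1) (fun k => q k.2) hc (fun k => hppos k.1)
      (fun k => hqpos k.2) hex
  have hf1 : f 1 = 0 := by rw [hfdef]; simp only [hF1, Real.log_one]
  have hkey : ∀ γ : ℝ, γ ≠ 1 → petzD ρ σ γ = slope f 1 γ := by
    intro γ _
    rw [slope_def_field, hf1, sub_zero, petzD, hre γ, hfdef]
    ring
  have hmono := hconv.slope_mono (Set.mem_univ (1:ℝ))
  intro a ha b hb hab
  simp only
  rw [hkey a (ne_of_lt ha.2), hkey b (ne_of_lt hb.2)]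
  exact hmono ⟨Set.mem_univ _, ne_of_lt ha.2⟩ ⟨Set.mem_univ _, ne_of_lt hb.2⟩ hab

end
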